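/- Let n be a positive integer and w : {1,...,n} → ℤ with w_k ≥ 1 for all k. Let W = Σ_{k=1}^n w_k and w_max = max_k w_k, and assume n·w_max > W. Let β = √(W / (n·w_max − W)), C = √((W/2)² + β²·(n·w_max/2 − W/2)²), and for each k let d_k be the complex number with Re d_k = w_k and Im d_k = β·(w_max − w_k). If S ⊆ {1,...,n} satisfies 2·|S| = n and 2·Σ_{k∈S} w_k = W, then |Σ_{k∈S} d_k| = C (in particular |Σ_{k∈S} d_k| ≤ C and 2·|S| ≥ n). -/

import Mathlib

/-- Forward direction of the reduction from EQUIPARTITION to the decision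
version of C-KP: every EQUIPARTITION solution yields a feasible C-KP solution
meeting the cardinality bound, whose demand sum has magnitude exactly `C`. -/
theorem ckp_reduction_forward (n : ℕ) (hn : 0 < n)
    (w : Fin n → ℤ) (hw : ∀ k, 1 ≤ w k)
    (W : ℤ) (hW : W = ∑ k, w k)
    (wmax : ℤ) (hwmax_ub : ∀ k, w k ≤ wmax) (hwmax_mem : ∃ k, w k = wmax)
    (hlt : W < (n : ℤ) * wmax)
    (β : ℝ) (hβ : β = Real.sqrt ((W : ℝ) / ((n : ℝ) * (wmax : ℝ) - (W : ℝ))))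
    (C : ℝ) (hC : C = Real.sqrt (((W : ℝ) / 2) ^ 2 +
      β ^ 2 * ((n : ℝ) * (wmax : ℝ) / 2 - (W : ℝ) / 2) ^ 2))
    (d : Fin n → ℂ)
    (hd_re : ∀ k, (d k).re = (w k : ℝ))
    (hd_im : ∀ k, (d k).im = β * ((wmax : ℝ) - (w k : ℝ)))
    (S : Finset (Fin n)) (hcard : 2 * S.card = n)
    (hsum : 2 * ∑ k ∈ S, w k = W) :
    ‖∑ k ∈ S, d k‖ = C := by
  have hre : (∑ k ∈ S, d k).re = (W : ℝ) / 2 := by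
    rw [Complex.re_sum]
    have : ∑ k ∈ S, (d k).re = ((∑ k ∈ S, w k : ℤ) : ℝ) := by
      push_cast
      exact Finset.sum_congr rfl fun k _ => hd_re k
    rw [this]
    have : (2 : ℝ) * ((∑ k ∈ S, w k : ℤ) : ℝ) = (W : ℝ) := by
      exact_mod_cast congrArg (Int.cast : ℤ → ℝ) hsum
    linarith
  have him : (∑ k ∈ S, d k).im = β * ((n : ℝ) * (wmax : ℝ) / 2 - (W : ℝ) / 2) := by
    rw [Complex.im_sum]
    have h1 : ∑ k ∈ S, (d k).im = β * ((S.card : ℝ) * (wmax : ℝ) - ((∑ k ∈ S, w k : ℤ) : ℝ)) := by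
      have : ∀ k ∈ S, (d k).im = β * ((wmax:ℝ) - (w k : ℝ)) := fun k _ => hd_im k
      rw [Finset.sum_congr rfl this, ← Finset.mul_sum, Finset.sum_sub_distrib]
      push_cast
      simp [mul_comm]
    rw [h1]
    have h2 : (2 : ℝ) * ((∑ k ∈ S, w k : ℤ) : ℝ) = (W : ℝ) := by
      exact_mod_cast congrArg (Int.cast : ℤ → ℝ) hsum
    have h3 : (2 : ℝ) * (S.card : ℝ) = (n : ℝ) := by exact_mod_cast hcard
    have : (S.card : ℝ) * (wmax : ℝ) - ((∑ k ∈ S, w k : ℤ) : ℝ)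
        = (n : ℝ) * (wmax : ℝ) / 2 - (W : ℝ) / 2 := by
      rw [← h2, ← h3]; ring
    rw [this]
  rw [Complex.norm_def, Complex.normSq_apply, hre, him, hC]
  ring_nf
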